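/- Let E_1, …, E_m, F be Banach spaces, let 𝒞_1, …, 𝒞_m be injective classes of linear operators on E_1, …, E_m respectively, and let 𝒩 be an m-semi-ideal. Then the set 𝒩∘(𝒞_1,…,𝒞_m)(E_1,…,E_m;F) of all continuous m-linear operators A : E_1 × ⋯ × E_m → F for which there exist Banach spaces G_1, …, G_m, linear operators S_i ∈ 𝒞_i(E_i, G_i) for i = 1,…,m, and an m-linear operator B ∈ 𝒩(G_1,…,G_m;F) such that A = B ∘ (S_1,…,S_m), is a closed linear subspace of L(E_1,…,E_m;F). -/

import Mathlib

open Filter Topology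
open scoped ENNReal

universe u

/-- A bundled Banach space. -/
structure BanachSp' : Type (u + 1) where
  carrier : Type u
  [nacg : NormedAddCommGroup carrier]
  [nsp : NormedSpace ℝ carrier]
  [cs : CompleteSpace carrier]

attribute [instance] BanachSp'.nacg BanachSp'.nsp BanachSp'.cs

/- ### Auxiliary constructions for the closedness proof ### -/


set_option linter.unusedSectionVars false
section Block

variable {X Gc : Type u} [NormedAddCommGroup X] [NormedSpace ℝ X] [CompleteSpace X]
  [NormedAddCommGroup Gc] [NormedSpace ℝ Gc] [CompleteSpace Gc]

/-- The taming operator `φ(x,h) = T x + Λ⁻¹ h`. -/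
noncomputable def phiB (T : X →L[ℝ] Gc) (Λ : ℝ) : (X × Gc) →L[ℝ] Gc :=
  T.comp (ContinuousLinearMap.fst ℝ X Gc) + Λ⁻¹ • ContinuousLinearMap.snd ℝ X Gc

theorem phiB_apply (T : X →L[ℝ] Gc) (Λ : ℝ) (w : X × Gc) :
    phiB T Λ w = T w.1 + Λ⁻¹ • w.2 := rfl

/-- The tamed quotient space. -/
def YB (T : X →L[ℝ] Gc) (Λ : ℝ) : Type u :=
  (X × Gc) ⧸ LinearMap.ker (phiB T Λ : (X × Gc) →ₗ[ℝ] Gc)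

noncomputable instance (T : X →L[ℝ] Gc) (Λ : ℝ) : NormedAddCommGroup (YB T Λ) := by
  unfold YB
  haveI : IsClosed ((LinearMap.ker (phiB T Λ : (X × Gc) →ₗ[ℝ] Gc) : Submodule ℝ (X × Gc)) : Set (X × Gc)) :=
    ContinuousLinearMap.isClosed_ker _
  infer_instance

noncomputable instance (T : X →L[ℝ] Gc) (Λ : ℝ) : NormedSpace ℝ (YB T Λ) := by
  unfold YB; infer_instance

instance (T : X →L[ℝ] Gc) (Λ : ℝ) : CompleteSpace (YB T Λ) := by
  unfold YB; infer_instance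

/-- The quotient map as a continuous linear map. -/
noncomputable def mkB (T : X →L[ℝ] Gc) (Λ : ℝ) : (X × Gc) →L[ℝ] YB T Λ :=
  LinearMap.mkContinuous (LinearMap.ker (phiB T Λ : (X × Gc) →ₗ[ℝ] Gc)).mkQ 1 (fun w => by
    rw [one_mul]; exact Submodule.Quotient.norm_mk_le _ w)

theorem mkB_surjective (T : X →L[ℝ] Gc) (Λ : ℝ) : Function.Surjective (mkB T Λ) :=
  Submodule.mkQ_surjective _

theorem norm_mkB_le (T : X →L[ℝ] Gc) (Λ : ℝ) (w : X × Gc) : ‖mkB T Λ w‖ ≤ ‖w‖ :=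
  Submodule.Quotient.norm_mk_le _ w

theorem mkB_lift (T : X →L[ℝ] Gc) (Λ : ℝ) (y : YB T Λ) {ε : ℝ} (hε : 0 < ε) :
    ∃ w : X × Gc, mkB T Λ w = y ∧ ‖w‖ < ‖y‖ + ε :=
  Submodule.Quotient.norm_mk_lt y hε

/-- The lifted map `j : Y → G` with `j ∘ mk = φ`. -/
noncomputable def jB (T : X →L[ℝ] Gc) (Λ : ℝ) (hT : ‖T‖ ≤ 1) (hΛ : 1 ≤ Λ) :
    YB T Λ →L[ℝ] Gc :=
  LinearMap.mkContinuous
    ((LinearMap.ker (phiB T Λ : (X × Gc) →ₗ[ℝ] Gc)).liftQ (phiB T Λ).toLinearMap (le_of_eq rfl)) 2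
    (by
      intro y
      refine le_of_forall_pos_le_add (fun ε hε => ?_)
      obtain ⟨w, hw, hwn⟩ := Submodule.Quotient.norm_mk_lt (S := LinearMap.ker (phiB T Λ : (X × Gc) →ₗ[ℝ] Gc)) y
        (half_pos hε)
      rw [← hw]
      have h2 : ‖phiB T Λ w‖ ≤ 2 * ‖w‖ := by
        rw [phiB_apply]
        have hx : ‖w.1‖ ≤ ‖w‖ := norm_fst_le w
        have hh : ‖w.2‖ ≤ ‖w‖ := norm_snd_le w
        have hTx : ‖T w.1‖ ≤ ‖w‖ := by
          calc ‖T w.1‖ ≤ ‖T‖ * ‖w.1‖ := T.le_opNorm _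
          _ ≤ 1 * ‖w‖ := by
            apply mul_le_mul hT hx (norm_nonneg _) zero_le_one
          _ = ‖w‖ := one_mul _
        have hΛh : ‖Λ⁻¹ • w.2‖ ≤ ‖w‖ := by
          rw [norm_smul, norm_inv, Real.norm_eq_abs, abs_of_pos (lt_of_lt_of_le one_pos hΛ)]
          have : Λ⁻¹ ≤ 1 := by
            rw [inv_le_one_iff₀]; right; exact hΛ
          calc Λ⁻¹ * ‖w.2‖ ≤ 1 * ‖w‖ :=
            mul_le_mul this hh (norm_nonneg _) zero_le_one
          _ = ‖w‖ := one_mul _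
        calc ‖T w.1 + Λ⁻¹ • w.2‖ ≤ ‖T w.1‖ + ‖Λ⁻¹ • w.2‖ := norm_add_le _ _
        _ ≤ 2 * ‖w‖ := by linarith
      have hyn : ‖w‖ < ‖(Submodule.Quotient.mk w : YB T Λ)‖ + ε / 2 := by rw [hw]; exact hwn
      show ‖phiB T Λ w‖ ≤ 2 * ‖(Submodule.Quotient.mk w : YB T Λ)‖ + ε
      nlinarith [norm_nonneg w])

theorem jB_mkB (T : X →L[ℝ] Gc) (Λ : ℝ) (hT : ‖T‖ ≤ 1) (hΛ : 1 ≤ Λ) (w : X × Gc) :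
    jB T Λ hT hΛ (mkB T Λ w) = phiB T Λ w := rfl

/-- The canonical map `ι : G → Y`, `g ↦ mk (0, Λ g)`. -/
noncomputable def iotaB (T : X →L[ℝ] Gc) (Λ : ℝ) : Gc →L[ℝ] YB T Λ :=
  (mkB T Λ).comp (Λ • ContinuousLinearMap.inr ℝ X Gc)

theorem iotaB_apply (T : X →L[ℝ] Gc) (Λ : ℝ) (g : Gc) :
    iotaB T Λ g = mkB T Λ (0, Λ • g) := by
  show mkB T Λ (Λ • ((0 : X), g)) = mkB T Λ (0, Λ • g)
  congr 1
  rw [Prod.smul_mk, smul_zero]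

theorem jB_iotaB (T : X →L[ℝ] Gc) {Λ : ℝ} (hT : ‖T‖ ≤ 1) (hΛ : 1 ≤ Λ) (g : Gc) :
    jB T Λ hT hΛ (iotaB T Λ g) = g := by
  have hΛ0 : Λ ≠ 0 := ne_of_gt (lt_of_lt_of_le one_pos hΛ)
  rw [iotaB_apply, jB_mkB, phiB_apply]
  simp [smul_smul, inv_mul_cancel₀ hΛ0]

theorem jB_surjective (T : X →L[ℝ] Gc) {Λ : ℝ} (hT : ‖T‖ ≤ 1) (hΛ : 1 ≤ Λ) :
    Function.Surjective (jB T Λ hT hΛ) :=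
  fun g => ⟨iotaB T Λ g, jB_iotaB T hT hΛ g⟩

theorem iotaB_injective (T : X →L[ℝ] Gc) {Λ : ℝ} (hT : ‖T‖ ≤ 1) (hΛ : 1 ≤ Λ) :
    Function.Injective (iotaB T Λ) := by
  intro a b hab
  have := congrArg (jB T Λ hT hΛ) hab
  rwa [jB_iotaB T hT hΛ, jB_iotaB T hT hΛ] at this

theorem iotaB_T_eq (T : X →L[ℝ] Gc) {Λ : ℝ} (hΛ : 1 ≤ Λ) (x : X) :
    iotaB T Λ (T x) = mkB T Λ (x, 0) := by
  have hΛ0 : Λ ≠ 0 := ne_of_gt (lt_of_lt_of_le one_pos hΛ)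
  rw [iotaB_apply]
  show (Submodule.Quotient.mk (0, Λ • T x) : YB T Λ) = Submodule.Quotient.mk (x, 0)
  rw [Submodule.Quotient.eq]
  have : phiB T Λ ((0, Λ • T x) - (x, 0)) = 0 := by
    rw [phiB_apply]
    show T (0 - x) + Λ⁻¹ • (Λ • T x - 0) = 0
    rw [zero_sub, sub_zero, map_neg, smul_smul, inv_mul_cancel₀ hΛ0, one_smul]
    exact neg_add_cancel _
  exact this

theorem norm_iotaB_T_le (T : X →L[ℝ] Gc) {Λ : ℝ} (hΛ : 1 ≤ Λ) (x : X) :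
    ‖iotaB T Λ (T x)‖ ≤ ‖x‖ := by
  rw [iotaB_T_eq T hΛ x]
  refine le_trans (norm_mkB_le T Λ _) ?_
  rw [Prod.norm_def]
  simp [norm_nonneg]

end Block

section KeyEstimate

variable {m : ℕ} {X Gc : Fin m → Type u}
  [∀ i, NormedAddCommGroup (X i)] [∀ i, NormedSpace ℝ (X i)] [∀ i, CompleteSpace (X i)]
  [∀ i, NormedAddCommGroup (Gc i)] [∀ i, NormedSpace ℝ (Gc i)] [∀ i, CompleteSpace (Gc i)]
  {Fc : Type u} [NormedAddCommGroup Fc] [NormedSpace ℝ Fc]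

theorem key_estimate (T : ∀ i, X i →L[ℝ] Gc i) {Λ : ℝ} (hT : ∀ i, ‖T i‖ ≤ 1) (hΛ : 1 ≤ Λ)
    (B : ContinuousMultilinearMap ℝ Gc Fc) (Δ : ContinuousMultilinearMap ℝ X Fc)
    (hfact : ∀ x, Δ x = B (fun i => T i (x i))) :
    ‖B.compContinuousLinearMap (fun i => jB (T i) Λ (hT i) hΛ)‖ ≤
      2 ^ m * ‖Δ‖ + m * 3 ^ m * Λ⁻¹ * ‖B‖ := by
  have hΛ0 : (0:ℝ) < Λ := lt_of_lt_of_le one_pos hΛ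
  have hΛinv0 : (0:ℝ) ≤ Λ⁻¹ := le_of_lt (inv_pos.mpr hΛ0)
  have hΛinv1 : Λ⁻¹ ≤ 1 := by rw [inv_le_one_iff₀]; right; exact hΛ
  set C : ℝ := 2 ^ m * ‖Δ‖ + m * 3 ^ m * Λ⁻¹ * ‖B‖ with hC
  have hC0 : 0 ≤ C := by
    rw [hC]
    have h1 : (0:ℝ) ≤ 2 ^ m * ‖Δ‖ := by positivity
    have h2 : (0:ℝ) ≤ (m:ℝ) * 3 ^ m * Λ⁻¹ * ‖B‖ := by positivity
    linarith
  -- unit ball bound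
  have hunit : ∀ y : (∀ i, YB (T i) Λ), (∀ i, ‖y i‖ ≤ 1) →
      ‖B (fun i => jB (T i) Λ (hT i) hΛ (y i))‖ ≤ C := by
    intro y hy
    have hlift : ∀ i, ∃ w : X i × Gc i, mkB (T i) Λ w = y i ∧ ‖w‖ < 3/2 := by
      intro i
      obtain ⟨w, hw1, hw2⟩ := mkB_lift (T i) Λ (y i) (ε := 1/2) (by norm_num)
      exact ⟨w, hw1, by have := hy i; linarith⟩
    choose w hw hwn using hlift
    have hx : ∀ i, ‖(w i).1‖ ≤ 3/2 := fun i => le_trans (norm_fst_le _) (le_of_lt (hwn i))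
    have hh : ∀ i, ‖(w i).2‖ ≤ 3/2 := fun i => le_trans (norm_snd_le _) (le_of_lt (hwn i))
    have hTx : ∀ i, ‖T i ((w i).1)‖ ≤ 3/2 := by
      intro i
      calc ‖T i ((w i).1)‖ ≤ ‖T i‖ * ‖(w i).1‖ := (T i).le_opNorm _
      _ ≤ 1 * (3/2) := mul_le_mul (hT i) (hx i) (norm_nonneg _) zero_le_one
      _ = 3/2 := one_mul _
    set M₁ : ∀ i, Gc i := fun i => jB (T i) Λ (hT i) hΛ (y i) with hM₁
    set M₂ : ∀ i, Gc i := fun i => T i ((w i).1) with hM₂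
    have hjy : ∀ i, M₁ i = T i ((w i).1) + Λ⁻¹ • (w i).2 := by
      intro i
      rw [hM₁]
      show jB (T i) Λ (hT i) hΛ (y i) = _
      rw [← hw i, jB_mkB, phiB_apply]
    have hM₁n : ‖M₁‖ ≤ 3 := by
      refine pi_norm_le_iff_of_nonneg (by norm_num) |>.mpr (fun i => ?_)
      rw [hjy i]
      have h1 : ‖T i ((w i).1) + Λ⁻¹ • (w i).2‖ ≤ ‖T i ((w i).1)‖ + ‖Λ⁻¹ • (w i).2‖ :=
        norm_add_le _ _
      have h2 : ‖Λ⁻¹ • (w i).2‖ = Λ⁻¹ * ‖(w i).2‖ := by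
        rw [norm_smul, norm_inv, Real.norm_eq_abs, abs_of_pos hΛ0]
      have h3 : Λ⁻¹ * ‖(w i).2‖ ≤ 1 * (3/2) :=
        mul_le_mul hΛinv1 (hh i) (norm_nonneg _) zero_le_one
      have h4 := hTx i
      linarith
    have hM₂n : ‖M₂‖ ≤ 3 := by
      refine pi_norm_le_iff_of_nonneg (by norm_num) |>.mpr (fun i => ?_)
      exact le_trans (hTx i) (by norm_num)
    have hM₁₂ : ‖M₁ - M₂‖ ≤ Λ⁻¹ * (3/2) := by
      refine pi_norm_le_iff_of_nonneg (by positivity) |>.mpr (fun i => ?_)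
      have : (M₁ - M₂) i = Λ⁻¹ • (w i).2 := by
        rw [Pi.sub_apply, hjy i, hM₂]
        abel
      rw [this, norm_smul, norm_inv, Real.norm_eq_abs, abs_of_pos hΛ0]
      exact mul_le_mul_of_nonneg_left (hh i) hΛinv0
    have hdiff : ‖B M₁ - B M₂‖ ≤ (m:ℝ) * 3 ^ m * Λ⁻¹ * ‖B‖ := by
      have h := B.norm_image_sub_le M₁ M₂
      have hcard : (Fintype.card (Fin m)) = m := Fintype.card_fin m
      rw [hcard] at h
      have hmax : max ‖M₁‖ ‖M₂‖ ≤ 3 := max_le hM₁n hM₂n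
      have hmaxpow : max ‖M₁‖ ‖M₂‖ ^ (m - 1) ≤ 3 ^ (m - 1) :=
        pow_le_pow_left₀ (le_max_iff.mpr (Or.inl (norm_nonneg _))) hmax _
      have hfinal : ‖B‖ * m * max ‖M₁‖ ‖M₂‖ ^ (m-1) * ‖M₁ - M₂‖ ≤
          ‖B‖ * m * 3 ^ (m-1) * (Λ⁻¹ * (3/2)) := by
        have h1 : ‖B‖ * m * max ‖M₁‖ ‖M₂‖ ^ (m-1) ≤ ‖B‖ * m * 3 ^ (m-1) := by
          have : (0:ℝ) ≤ ‖B‖ * m := by positivity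
          exact mul_le_mul_of_nonneg_left hmaxpow this
        have h2 : (0:ℝ) ≤ ‖M₁ - M₂‖ := norm_nonneg _
        have h3 : (0:ℝ) ≤ ‖B‖ * m * 3 ^ (m-1) := by positivity
        calc ‖B‖ * m * max ‖M₁‖ ‖M₂‖ ^ (m-1) * ‖M₁ - M₂‖
            ≤ ‖B‖ * m * 3 ^ (m-1) * ‖M₁ - M₂‖ := mul_le_mul_of_nonneg_right h1 h2
        _ ≤ ‖B‖ * m * 3 ^ (m-1) * (Λ⁻¹ * (3/2)) := mul_le_mul_of_nonneg_left hM₁₂ h3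
      have hconst : ‖B‖ * m * 3 ^ (m-1) * (Λ⁻¹ * (3/2)) ≤ (m:ℝ) * 3 ^ m * Λ⁻¹ * ‖B‖ := by
        cases m with
        | zero => norm_num
        | succ k =>
          rw [Nat.add_sub_cancel, pow_succ]
          have hnn : (0:ℝ) ≤ ‖B‖ * ((k:ℝ)+1) * 3 ^ k * Λ⁻¹ := by positivity
          have hc : ((k+1 : ℕ) : ℝ) = (k:ℝ) + 1 := by push_cast; ring
          calc ‖B‖ * ((k+1 : ℕ) : ℝ) * 3 ^ k * (Λ⁻¹ * (3/2))
              = (‖B‖ * ((k:ℝ)+1) * 3 ^ k * Λ⁻¹) * (3/2) := by rw [hc]; ring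
          _ ≤ (‖B‖ * ((k:ℝ)+1) * 3 ^ k * Λ⁻¹) * 3 :=
            mul_le_mul_of_nonneg_left (by norm_num) hnn
          _ = ((k+1 : ℕ) : ℝ) * (3 ^ k * 3) * Λ⁻¹ * ‖B‖ := by rw [hc]; ring
      exact le_trans h (le_trans hfinal hconst)
    have hmain : ‖B M₂‖ ≤ 2 ^ m * ‖Δ‖ := by
      have : B M₂ = Δ (fun i => (w i).1) := (hfact (fun i => (w i).1)).symm
      rw [this]
      calc ‖Δ (fun i => (w i).1)‖ ≤ ‖Δ‖ * ∏ i, ‖(w i).1‖ := Δ.le_opNorm _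
      _ ≤ ‖Δ‖ * (3/2) ^ m := by
        refine mul_le_mul_of_nonneg_left ?_ (norm_nonneg _)
        calc ∏ i, ‖(w i).1‖ ≤ ∏ _i : Fin m, ((3:ℝ)/2) :=
          Finset.prod_le_prod (fun i _ => norm_nonneg _) (fun i _ => hx i)
        _ = (3/2) ^ m := by rw [Finset.prod_const, Finset.card_univ, Fintype.card_fin]
      _ ≤ ‖Δ‖ * 2 ^ m := by
        refine mul_le_mul_of_nonneg_left (pow_le_pow_left₀ (by norm_num) (by norm_num) _)
          (norm_nonneg _)
      _ = 2 ^ m * ‖Δ‖ := mul_comm _ _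
    have htri : ‖B M₁‖ ≤ ‖B M₂‖ + ‖B M₁ - B M₂‖ := by
      have h := norm_add_le (B M₂) (B M₁ - B M₂)
      have he : B M₂ + (B M₁ - B M₂) = B M₁ := by abel
      rwa [he] at h
    have hfin : ‖B M₂‖ + ‖B M₁ - B M₂‖ ≤ C := by rw [hC]; exact add_le_add hmain hdiff
    exact le_trans htri hfin
  -- general bound by scaling
  refine ContinuousMultilinearMap.opNorm_le_bound hC0 (fun y => ?_)
  by_cases hzero : ∃ i, y i = 0
  · obtain ⟨i, hi⟩ := hzero
    rw [ContinuousMultilinearMap.map_coord_zero _ i hi]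
    have : ∏ j, ‖y j‖ = 0 := Finset.prod_eq_zero (Finset.mem_univ i) (by rw [hi, norm_zero])
    rw [this, norm_zero, mul_zero]
  · push_neg at hzero
    set u : ∀ i, YB (T i) Λ := fun i => ‖y i‖⁻¹ • y i with hu
    have hun : ∀ i, ‖u i‖ ≤ 1 := by
      intro i
      rw [hu]
      simp only [norm_smul, norm_inv, norm_norm]
      rw [inv_mul_cancel₀ (norm_ne_zero_iff.mpr (hzero i))]
    have hy : y = fun i => ‖y i‖ • u i := by
      funext i
      rw [hu]
      simp only
      rw [smul_inv_smul₀ (norm_ne_zero_iff.mpr (hzero i))]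
    have happ : (B.compContinuousLinearMap (fun i => jB (T i) Λ (hT i) hΛ)) y =
        (∏ i, ‖y i‖) • (B.compContinuousLinearMap (fun i => jB (T i) Λ (hT i) hΛ)) u := by
      conv_lhs => rw [hy]
      exact ContinuousMultilinearMap.map_smul_univ _ _ _
    rw [happ, norm_smul]
    have h1 : ‖∏ i, ‖y i‖‖ = ∏ i, ‖y i‖ := by
      rw [Real.norm_eq_abs, abs_of_nonneg (Finset.prod_nonneg (fun i _ => norm_nonneg _))]
    rw [h1, mul_comm]
    refine mul_le_mul_of_nonneg_right ?_ (Finset.prod_nonneg (fun i _ => norm_nonneg _))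
    rw [ContinuousMultilinearMap.compContinuousLinearMap_apply]
    exact hunit u hun

end KeyEstimate

section LpHelpers

variable {Y : ℕ → Type u} [∀ n, NormedAddCommGroup (Y n)] [∀ n, NormedSpace ℝ (Y n)]
  [∀ n, CompleteSpace (Y n)]

/-- `lp.single` as a continuous linear map. -/
noncomputable def lpSingleCLM (n : ℕ) : Y n →L[ℝ] lp Y ∞ :=
  LinearMap.mkContinuous
    { toFun := fun a => lp.single ∞ n a
      map_add' := fun a b => by
        refine lp.ext (funext (fun j => ?_))
        by_cases hj : j = n
        · subst hj; simp [lp.single_apply_self]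
        · simp [lp.single_apply_ne _ _ _ hj]
      map_smul' := fun c a => by simp }
    1 (fun a => by
      refine le_trans (lp.norm_le_of_forall_le (norm_nonneg a) (fun j => ?_)) (by simp)
      show ‖lp.single ∞ n a j‖ ≤ ‖a‖
      by_cases hj : j = n
      · subst hj; rw [lp.single_apply_self]
      · rw [lp.single_apply_ne _ _ _ hj, norm_zero]; exact norm_nonneg a)

theorem lpSingleCLM_apply_self (n : ℕ) (a : Y n) : (lpSingleCLM n a : lp Y ∞) n = a :=
  lp.single_apply_self _ _ _

theorem lpSingleCLM_apply_ne (n : ℕ) (a : Y n) {j : ℕ} (hj : j ≠ n) :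
    (lpSingleCLM n a : lp Y ∞) j = 0 :=
  lp.single_apply_ne _ _ _ hj

theorem norm_lpSingleCLM_le (n : ℕ) : ‖(lpSingleCLM (Y := Y) n)‖ ≤ 1 :=
  LinearMap.mkContinuous_norm_le _ zero_le_one _

/-- Coordinate evaluation as a continuous linear map. -/
noncomputable def lpEvalCLM (n : ℕ) : lp Y ∞ →L[ℝ] Y n :=
  LinearMap.mkContinuous
    { toFun := fun f => f n
      map_add' := fun f g => by
        have := lp.coeFn_add f g
        exact congrFun this n
      map_smul' := fun c f => by
        have := lp.coeFn_smul c f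
        exact congrFun this n }
    1 (fun f => by
      simpa using lp.norm_apply_le_norm ENNReal.top_ne_zero f n)

theorem lpEvalCLM_apply (n : ℕ) (f : lp Y ∞) : lpEvalCLM n f = f n := rfl

theorem norm_lpEvalCLM_le (n : ℕ) : ‖(lpEvalCLM (Y := Y) n)‖ ≤ 1 :=
  LinearMap.mkContinuous_norm_le _ zero_le_one _

theorem lpEvalCLM_single (n : ℕ) (a : Y n) : lpEvalCLM n (lpSingleCLM n a) = a :=
  lpSingleCLM_apply_self n a

theorem lpEvalCLM_surjective (n : ℕ) : Function.Surjective (lpEvalCLM (Y := Y) n) :=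
  fun a => ⟨lpSingleCLM n a, lpEvalCLM_single n a⟩

theorem lpSingleCLM_injective (n : ℕ) : Function.Injective (lpSingleCLM (Y := Y) n) := by
  intro a b hab
  have := congrArg (lpEvalCLM n) hab
  rwa [lpEvalCLM_single, lpEvalCLM_single] at this

theorem lp_coe_finset_sum {ι' : Type*} (s : Finset ι') (g : ι' → lp Y ∞) (j : ℕ) :
    ((∑ i ∈ s, g i : lp Y ∞) : ∀ n, Y n) j = ∑ i ∈ s, (g i : ∀ n, Y n) j := by
  have h := map_sum (lpEvalCLM (Y := Y) j) g s
  exact h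

variable {X : Type u} [NormedAddCommGroup X] [NormedSpace ℝ X]

theorem half_pow_le_one (n : ℕ) : ((2:ℝ)⁻¹) ^ n ≤ 1 := pow_le_one₀ (by norm_num) (by norm_num)

/-- The underlying function of the weighted diagonal map. -/
noncomputable def lpDiagFun (W : ∀ n, X →L[ℝ] Y n)
    (hW : ∀ n x, ‖W n x‖ ≤ (2⁻¹ : ℝ) ^ n * ‖x‖) (x : X) : lp Y ∞ :=
  ⟨fun n => W n x, memℓp_infty (⟨‖x‖, by
    rintro - ⟨n, rfl⟩
    refine le_trans (hW n x) ?_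
    nlinarith [norm_nonneg x, half_pow_le_one n]⟩)⟩

theorem lpDiagFun_coe (W : ∀ n, X →L[ℝ] Y n)
    (hW : ∀ n x, ‖W n x‖ ≤ (2⁻¹ : ℝ) ^ n * ‖x‖) (x : X) (n : ℕ) :
    (lpDiagFun W hW x : ∀ n, Y n) n = W n x := rfl

theorem lpDiagFun_norm_le (W : ∀ n, X →L[ℝ] Y n)
    (hW : ∀ n x, ‖W n x‖ ≤ (2⁻¹ : ℝ) ^ n * ‖x‖) (x : X) :
    ‖lpDiagFun W hW x‖ ≤ ‖x‖ := by
  refine lp.norm_le_of_forall_le (norm_nonneg x) (fun n => ?_)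
  refine le_trans (hW n x) ?_
  nlinarith [norm_nonneg x, half_pow_le_one n]

/-- Weighted diagonal map into the `ℓ∞`-sum. -/
noncomputable def lpDiag (W : ∀ n, X →L[ℝ] Y n)
    (hW : ∀ n x, ‖W n x‖ ≤ (2⁻¹ : ℝ) ^ n * ‖x‖) : X →L[ℝ] lp Y ∞ :=
  LinearMap.mkContinuous
    { toFun := lpDiagFun W hW
      map_add' := fun a b => by
        refine lp.ext (funext (fun n => ?_))
        have h := congrFun (lp.coeFn_add (lpDiagFun W hW a) (lpDiagFun W hW b)) n
        show (lpDiagFun W hW (a+b) : ∀ n, Y n) n = ((lpDiagFun W hW a + lpDiagFun W hW b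
          : lp Y ∞) : ∀ n, Y n) n
        rw [h]
        exact map_add (W n) a b
      map_smul' := fun c a => by
        refine lp.ext (funext (fun n => ?_))
        have h := congrFun (lp.coeFn_smul c (lpDiagFun W hW a)) n
        show (lpDiagFun W hW (c • a) : ∀ n, Y n) n = ((c • lpDiagFun W hW a
          : lp Y ∞) : ∀ n, Y n) n
        rw [h]
        exact map_smul (W n) c a }
    1 (fun x => by
      rw [one_mul]
      exact lpDiagFun_norm_le W hW x)

theorem lpDiag_apply (W : ∀ n, X →L[ℝ] Y n)
    (hW : ∀ n x, ‖W n x‖ ≤ (2⁻¹ : ℝ) ^ n * ‖x‖) (x : X) :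
    lpDiag W hW x = lpDiagFun W hW x := rfl

theorem lpDiag_coord (W : ∀ n, X →L[ℝ] Y n)
    (hW : ∀ n x, ‖W n x‖ ≤ (2⁻¹ : ℝ) ^ n * ‖x‖) (x : X) (n : ℕ) :
    lpEvalCLM n (lpDiag W hW x) = W n x := rfl

theorem lpDiag_tendsto (W : ∀ n, X →L[ℝ] Y n)
    (hW : ∀ n x, ‖W n x‖ ≤ (2⁻¹ : ℝ) ^ n * ‖x‖) :
    Tendsto (fun N => ∑ n ∈ Finset.range (N+1), (lpSingleCLM n).comp (W n)) atTop
      (𝓝 (lpDiag W hW)) := by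
  have key : ∀ N, ‖lpDiag W hW - ∑ n ∈ Finset.range (N+1), (lpSingleCLM n).comp (W n)‖ ≤
      (2⁻¹ : ℝ) ^ N := by
    intro N
    refine ContinuousLinearMap.opNorm_le_bound _ (by positivity) (fun x => ?_)
    have hsx : ((∑ n ∈ Finset.range (N+1), (lpSingleCLM n).comp (W n)) x)
        = ∑ n ∈ Finset.range (N+1), lpSingleCLM n (W n x) := by
      rw [ContinuousLinearMap.sum_apply]
      rfl
    have happ : ((lpDiag W hW - ∑ n ∈ Finset.range (N+1), (lpSingleCLM n).comp (W n)) x)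
        = lpDiagFun W hW x - ∑ n ∈ Finset.range (N+1), lpSingleCLM n (W n x) := by
      rw [ContinuousLinearMap.sub_apply, hsx, lpDiag_apply]
    rw [happ]
    refine lp.norm_le_of_forall_le (by positivity) (fun j => ?_)
    have hcoe : ((lpDiagFun W hW x - ∑ n ∈ Finset.range (N+1), lpSingleCLM n (W n x)
        : lp Y ∞) : ∀ n, Y n) j = W j x -
        ∑ n ∈ Finset.range (N+1), ((lpSingleCLM n (W n x) : lp Y ∞) : ∀ n, Y n) j := by
      have h1 := congrFun (lp.coeFn_sub (lpDiagFun W hW x)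
        (∑ n ∈ Finset.range (N+1), lpSingleCLM n (W n x))) j
      rw [h1]
      show (lpDiagFun W hW x : ∀ n, Y n) j - ((∑ n ∈ Finset.range (N+1),
        lpSingleCLM n (W n x) : lp Y ∞) : ∀ n, Y n) j = _
      rw [lp_coe_finset_sum]
      rfl
    rw [hcoe]
    by_cases hj : j ∈ Finset.range (N+1)
    · have hsum : ∑ n ∈ Finset.range (N+1), ((lpSingleCLM n (W n x) : lp Y ∞) : ∀ n, Y n) j
          = W j x := by
        rw [Finset.sum_eq_single_of_mem j hj]
        · exact lpSingleCLM_apply_self j (W j x)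
        · intro b _ hbj
          exact lpSingleCLM_apply_ne b (W b x) (Ne.symm hbj)
      rw [hsum, sub_self, norm_zero]
      positivity
    · have hsum : ∑ n ∈ Finset.range (N+1), ((lpSingleCLM n (W n x) : lp Y ∞) : ∀ n, Y n) j
          = 0 := by
        refine Finset.sum_eq_zero (fun b hb => ?_)
        refine lpSingleCLM_apply_ne b (W b x) ?_
        intro hjb
        exact hj (hjb ▸ hb)
      rw [hsum, sub_zero]
      have hjN : N ≤ j := by
        rw [Finset.mem_range] at hj
        omega
      refine le_trans (hW j x) ?_
      have h1 : ((2:ℝ)⁻¹) ^ j ≤ (2⁻¹ : ℝ) ^ N :=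
        pow_le_pow_of_le_one (by norm_num) (by norm_num) hjN
      nlinarith [norm_nonneg x, pow_nonneg (show (0:ℝ) ≤ 2⁻¹ by norm_num) j]
  rw [tendsto_iff_norm_sub_tendsto_zero]
  refine squeeze_zero (g := fun N => (2⁻¹:ℝ)^N) (fun N => norm_nonneg _) (fun N => ?_) ?_
  · rw [norm_sub_rev]
    exact key N
  · exact tendsto_pow_atTop_nhds_zero_of_lt_one (by norm_num) (by norm_num)

end LpHelpers


/-- An injective class of linear operators on a Banach space `E`: to each Banach space `G`
it assigns a closed linear subspace of `L(E,G)`, stable under composition with injective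
operators on the left. -/
structure InjClass' (E : Type u) [NormedAddCommGroup E] [NormedSpace ℝ E] [CompleteSpace E] :
    Type (u + 1) where
  mem : ∀ G : BanachSp'.{u}, Set (E →L[ℝ] G.carrier)
  isClosed : ∀ G, IsClosed (mem G)
  zero_mem : ∀ G, (0 : E →L[ℝ] G.carrier) ∈ mem G
  add_mem : ∀ G, ∀ f ∈ mem G, ∀ g ∈ mem G, f + g ∈ mem G
  smul_mem : ∀ (G) (c : ℝ), ∀ f ∈ mem G, c • f ∈ mem G
  comp_inj : ∀ (G H : BanachSp'.{u}), ∀ T ∈ mem G, ∀ I : G.carrier →L[ℝ] H.carrier,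
    Function.Injective I → I.comp T ∈ mem H

/-- An `m`-semi-ideal: a class of continuous `m`-linear operators between Banach spaces whose
components are closed linear subspaces, stable under composition with surjective operators in
each variable and an injective operator on the left. -/
structure MSemiIdeal' (m : ℕ) : Type (u + 1) where
  mem : ∀ (G : Fin m → BanachSp'.{u}) (G₀ : BanachSp'.{u}),
    Set (ContinuousMultilinearMap ℝ (fun i => (G i).carrier) G₀.carrier)
  isClosed : ∀ G G₀, IsClosed (mem G G₀)
  zero_mem : ∀ G G₀, 0 ∈ mem G G₀
  add_mem : ∀ G G₀, ∀ A ∈ mem G G₀, ∀ B ∈ mem G G₀, A + B ∈ mem G G₀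
  smul_mem : ∀ (G G₀) (c : ℝ), ∀ A ∈ mem G G₀, c • A ∈ mem G G₀
  comp_mem : ∀ (G : Fin m → BanachSp'.{u}) (G₀ : BanachSp'.{u}), ∀ A ∈ mem G G₀,
    ∀ (H : Fin m → BanachSp'.{u}) (H₀ : BanachSp'.{u})
      (uu : ∀ i, (H i).carrier →L[ℝ] (G i).carrier), (∀ i, Function.Surjective (uu i)) →
      ∀ t : G₀.carrier →L[ℝ] H₀.carrier, Function.Injective t →
        t.compContinuousMultilinearMap (A.compContinuousLinearMap uu) ∈ mem H H₀

/-- The set `N ∘ (C₁,…,C_m)(E₁,…,E_m;F)` of `m`-linear operators `A : E₁ × ⋯ × E_m → F`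
factoring as `A = B ∘ (S₁,…,S_m)` with `S_i` in the injective class `C i` and `B` in the
`m`-semi-ideal `N`. -/
def FactorableOperators' {m : ℕ} (E : Fin m → BanachSp'.{u}) (F : BanachSp'.{u})
    (C : ∀ i, InjClass'.{u} (E i).carrier) (N : MSemiIdeal'.{u} m) :
    Set (ContinuousMultilinearMap ℝ (fun i => (E i).carrier) F.carrier) :=
  {A | ∃ (G : Fin m → BanachSp'.{u})
      (S : ∀ i, (E i).carrier →L[ℝ] (G i).carrier)
      (B : ContinuousMultilinearMap ℝ (fun i => (G i).carrier) F.carrier),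
      (∀ i, S i ∈ (C i).mem (G i)) ∧ B ∈ N.mem G F ∧
      ∀ x : ∀ i, (E i).carrier, A x = B fun i => S i (x i)}


section Helpers

variable {m : ℕ}

/-- Composing an element of a semi-ideal with surjective linear operators (no codomain map). -/
theorem MSemiIdeal'.comp_mem' (N : MSemiIdeal'.{u} m) {G : Fin m → BanachSp'.{u}}
    {F : BanachSp'.{u}}
    {B : ContinuousMultilinearMap ℝ (fun i => (G i).carrier) F.carrier}
    (hB : B ∈ N.mem G F) (H : Fin m → BanachSp'.{u})
    (uu : ∀ i, (H i).carrier →L[ℝ] (G i).carrier) (huu : ∀ i, Function.Surjective (uu i)) :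
    B.compContinuousLinearMap uu ∈ N.mem H F := by
  have h := N.comp_mem G F B hB H F uu huu (ContinuousLinearMap.id ℝ F.carrier)
    (fun a b hab => hab)
  have he : (ContinuousLinearMap.id ℝ F.carrier).compContinuousMultilinearMap
      (B.compContinuousLinearMap uu) = B.compContinuousLinearMap uu := by
    ext x; rfl
  rwa [he] at h

/-- A Banach space product, bundled. -/
noncomputable def BanachSp'.prod (G₁ G₂ : BanachSp'.{u}) : BanachSp'.{u} :=
  ⟨G₁.carrier × G₂.carrier⟩

theorem InjClass'.prod_mem {E : Type u} [NormedAddCommGroup E] [NormedSpace ℝ E]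
    [CompleteSpace E] (C : InjClass'.{u} E) {G₁ G₂ : BanachSp'.{u}}
    {S₁ : E →L[ℝ] G₁.carrier} {S₂ : E →L[ℝ] G₂.carrier}
    (h₁ : S₁ ∈ C.mem G₁) (h₂ : S₂ ∈ C.mem G₂) :
    S₁.prod S₂ ∈ C.mem (G₁.prod G₂) := by
  have hinl : Function.Injective (ContinuousLinearMap.inl ℝ G₁.carrier G₂.carrier) := by
    intro a b hab
    exact congrArg Prod.fst hab
  have hinr : Function.Injective (ContinuousLinearMap.inr ℝ G₁.carrier G₂.carrier) := by
    intro a b hab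
    exact congrArg Prod.snd hab
  have h1 := C.comp_inj G₁ (G₁.prod G₂) S₁ h₁ _ hinl
  have h2 := C.comp_inj G₂ (G₁.prod G₂) S₂ h₂ _ hinr
  have h := C.add_mem (G₁.prod G₂) _ h1 _ h2
  have he : (ContinuousLinearMap.inl ℝ G₁.carrier G₂.carrier).comp S₁ +
      (ContinuousLinearMap.inr ℝ G₁.carrier G₂.carrier).comp S₂ = S₁.prod S₂ := by
    ext x <;> simp
  exact (congrArg (fun f => f ∈ C.mem (G₁.prod G₂)) he).mp h

end Helpers

section MainParts

variable {m : ℕ} (E : Fin m → BanachSp'.{u}) (F : BanachSp'.{u})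
    (C : ∀ i, InjClass'.{u} (E i).carrier) (N : MSemiIdeal'.{u} m)

theorem factorable_zero :
    (0 : ContinuousMultilinearMap ℝ (fun i => (E i).carrier) F.carrier) ∈
      FactorableOperators' E F C N := by
  refine ⟨E, fun i => 0, 0, fun i => (C i).zero_mem _, N.zero_mem _ _, fun x => rfl⟩

theorem factorable_add :
    ∀ A₁ ∈ FactorableOperators' E F C N, ∀ A₂ ∈ FactorableOperators' E F C N,
      A₁ + A₂ ∈ FactorableOperators' E F C N := by
  rintro A₁ ⟨G₁, S₁, B₁, hS₁, hB₁, hA₁⟩ A₂ ⟨G₂, S₂, B₂, hS₂, hB₂, hA₂⟩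
  refine ⟨fun i => (G₁ i).prod (G₂ i), fun i => (S₁ i).prod (S₂ i),
    B₁.compContinuousLinearMap (fun i => ContinuousLinearMap.fst ℝ _ _) +
      B₂.compContinuousLinearMap (fun i => ContinuousLinearMap.snd ℝ _ _),
    fun i => (C i).prod_mem (hS₁ i) (hS₂ i), ?_, ?_⟩
  · refine N.add_mem _ _ _ ?_ _ ?_
    · exact N.comp_mem' hB₁ _ _ (fun i => fun g => ⟨(g, 0), rfl⟩)
    · exact N.comp_mem' hB₂ _ _ (fun i => fun g => ⟨(0, g), rfl⟩)
  · intro x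
    simp only [ContinuousMultilinearMap.add_apply, hA₁ x, hA₂ x,
      ContinuousMultilinearMap.compContinuousLinearMap_apply]
    rfl

theorem factorable_smul :
    ∀ (c : ℝ), ∀ A ∈ FactorableOperators' E F C N, c • A ∈ FactorableOperators' E F C N := by
  rintro c A ⟨G, S, B, hS, hB, hA⟩
  refine ⟨G, S, c • B, hS, N.smul_mem _ _ c _ hB, fun x => ?_⟩
  simp [hA x]

end MainParts


section MoreHelpers

theorem two_zpow_le' {s t : ℤ} (h : s ≤ t) : (2:ℝ)^s ≤ 2^t :=
  zpow_le_zpow_right₀ one_le_two h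

theorem two_pow_eq_zpow' (a : ℕ) : (2:ℝ)^a = (2:ℝ)^(a:ℤ) := (zpow_natCast 2 a).symm

theorem two_inv_pow_eq_zpow' (b : ℕ) : ((2:ℝ)⁻¹)^b = (2:ℝ)^(-(b:ℤ)) := by
  rw [inv_pow, ← zpow_natCast 2 b, ← zpow_neg]

theorem two_zpow_mul' (s t : ℤ) : (2:ℝ)^s * (2:ℝ)^t = 2^(s+t) :=
  (zpow_add₀ two_ne_zero s t).symm

theorem two_zpow_pos' (s : ℤ) : (0:ℝ) < 2^s := zpow_pos (by norm_num) s

end MoreHelpers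

section MainClosed

variable {m : ℕ} (E : Fin m → BanachSp'.{u}) (F : BanachSp'.{u})
    (C : ∀ i, InjClass'.{u} (E i).carrier) (N : MSemiIdeal'.{u} m)

theorem factorable_smul' :
    ∀ (c : ℝ), ∀ A ∈ FactorableOperators' E F C N, c • A ∈ FactorableOperators' E F C N := by
  rintro c A ⟨G, S, B, hS, hB, hA⟩
  refine ⟨G, S, c • B, hS, N.smul_mem _ _ c _ hB, fun x => ?_⟩
  simp [hA x]

theorem factorable_sub :
    ∀ A₁ ∈ FactorableOperators' E F C N, ∀ A₂ ∈ FactorableOperators' E F C N,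
      A₁ - A₂ ∈ FactorableOperators' E F C N := by
  intro A₁ h₁ A₂ h₂
  have h := factorable_add E F C N A₁ h₁ ((-1 : ℝ) • A₂) (factorable_smul' E F C N (-1) A₂ h₂)
  have he : A₁ + (-1 : ℝ) • A₂ = A₁ - A₂ := by
    ext x
    simp [sub_eq_add_neg]
  rwa [he] at h

/-- A factorization with normalized inner operators. -/
theorem factorable_normalized {A : ContinuousMultilinearMap ℝ (fun i => (E i).carrier) F.carrier}
    (hA : A ∈ FactorableOperators' E F C N) :
    ∃ (G : Fin m → BanachSp'.{u})
      (S : ∀ i, (E i).carrier →L[ℝ] (G i).carrier)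
      (B : ContinuousMultilinearMap ℝ (fun i => (G i).carrier) F.carrier),
      (∀ i, S i ∈ (C i).mem (G i)) ∧ (∀ i, ‖S i‖ ≤ 1) ∧ B ∈ N.mem G F ∧
      ∀ x : ∀ i, (E i).carrier, A x = B fun i => S i (x i) := by
  obtain ⟨G, S, B, hS, hB, hfact⟩ := hA
  set c : Fin m → ℝ := fun i => max ‖S i‖ 1 with hc
  have hc1 : ∀ i, 1 ≤ c i := fun i => le_max_right _ _
  have hcS : ∀ i, ‖S i‖ ≤ c i := fun i => le_max_left _ _
  have hc0 : ∀ i, c i ≠ 0 := fun i => ne_of_gt (lt_of_lt_of_le one_pos (hc1 i))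
  refine ⟨G, fun i => (c i)⁻¹ • S i,
    B.compContinuousLinearMap (fun i => c i • ContinuousLinearMap.id ℝ (G i).carrier),
    fun i => (C i).smul_mem _ _ _ (hS i), fun i => ?_, ?_, fun x => ?_⟩
  · show ‖(c i)⁻¹ • S i‖ ≤ 1
    refine le_trans (ContinuousLinearMap.opNorm_smul_le _ _) ?_
    rw [norm_inv, Real.norm_eq_abs, abs_of_pos (lt_of_lt_of_le one_pos (hc1 i))]
    rw [inv_mul_le_iff₀ (lt_of_lt_of_le one_pos (hc1 i))]
    have := hcS i
    nlinarith [hc1 i]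
  · refine N.comp_mem' hB G _ (fun i => fun g => ⟨(c i)⁻¹ • g, ?_⟩)
    show c i • ((c i)⁻¹ • g) = g
    rw [smul_inv_smul₀ (hc0 i)]
  · rw [hfact x, ContinuousMultilinearMap.compContinuousLinearMap_apply]
    congr 1
    funext i
    show S i (x i) = c i • (((c i)⁻¹ • S i) (x i))
    rw [ContinuousLinearMap.smul_apply]
    rw [smul_inv_smul₀ (hc0 i)]


theorem hLambda_term (a : ℕ) (b : ℝ) (hb : 0 ≤ b) (c : ℝ) (hc : 0 ≤ c) :
    c * ((2:ℝ)^a * (c * (b + 1)) + 1)⁻¹ * b ≤ ((2:ℝ)⁻¹)^a := by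
  set Λ : ℝ := (2:ℝ)^a * (c * (b + 1)) + 1 with hΛ
  have hΛpos : 0 < Λ := by
    have : (0:ℝ) ≤ (2:ℝ)^a * (c * (b + 1)) := by positivity
    rw [hΛ]; linarith
  have hone : ((2:ℝ)⁻¹)^a * (2:ℝ)^a = 1 := by
    rw [← mul_pow]; norm_num
  have hkey : c * b ≤ ((2:ℝ)⁻¹)^a * Λ := by
    have he : ((2:ℝ)⁻¹)^a * Λ = c * (b + 1) + ((2:ℝ)⁻¹)^a := by
      rw [hΛ]
      calc ((2:ℝ)⁻¹)^a * ((2:ℝ)^a * (c * (b + 1)) + 1)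
          = (((2:ℝ)⁻¹)^a * (2:ℝ)^a) * (c * (b + 1)) + ((2:ℝ)⁻¹)^a := by ring
      _ = c * (b + 1) + ((2:ℝ)⁻¹)^a := by rw [hone, one_mul]
    rw [he]
    have h1 : (0:ℝ) ≤ ((2:ℝ)⁻¹)^a := by positivity
    nlinarith
  calc c * Λ⁻¹ * b = (c * b) * Λ⁻¹ := by ring
  _ ≤ (((2:ℝ)⁻¹)^a * Λ) * Λ⁻¹ := by
    refine mul_le_mul_of_nonneg_right hkey (le_of_lt (inv_pos.mpr hΛpos))
  _ = ((2:ℝ)⁻¹)^a := by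
    rw [mul_assoc, mul_inv_cancel₀ (ne_of_gt hΛpos), mul_one]

set_option maxHeartbeats 2000000 in
set_option synthInstance.maxHeartbeats 1000000 in
theorem factorable_isClosed : IsClosed (FactorableOperators' E F C N) := by
  rw [← isSeqClosed_iff_isClosed]
  intro Aseq A hmem htend
  -- Step 1 : fast approximating sequence
  have happrox : ∀ n : ℕ, ∃ A', A' ∈ FactorableOperators' E F C N ∧
      ‖A - A'‖ ≤ 4⁻¹ * ((2:ℝ)⁻¹)^(n*(m+1)) := by
    intro n
    have hpos : (0:ℝ) < 4⁻¹ * ((2:ℝ)⁻¹)^(n*(m+1)) := by positivity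
    obtain ⟨k, hk⟩ := Metric.tendsto_atTop.mp htend _ hpos
    refine ⟨Aseq k, hmem k, ?_⟩
    have h1 := hk k (le_refl k)
    rw [dist_eq_norm] at h1
    rw [norm_sub_rev]
    linarith
  choose P hPmem hPdist using happrox
  -- Step 2 : telescoping differences
  set Q : ℕ → ContinuousMultilinearMap ℝ (fun i => (E i).carrier) F.carrier :=
    fun n => Nat.casesOn n (P 0) (fun k => P (k+1) - P k) with hQdef
  have hQs : ∀ k, Q (k+1) = P (k+1) - P k := fun k => rfl
  have hQmem : ∀ n, Q n ∈ FactorableOperators' E F C N := by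
    intro n
    cases n with
    | zero => exact hPmem 0
    | succ k => exact factorable_sub E F C N _ (hPmem (k+1)) _ (hPmem k)
  have hQnorm : ∀ k : ℕ, ‖Q (k+1)‖ ≤ ((2:ℝ)⁻¹)^(k*(m+1)) := by
    intro k
    rw [hQs]
    have h1 := hPdist (k+1)
    have h2 := hPdist k
    have h3 : ‖P (k+1) - P k‖ ≤ ‖A - P (k+1)‖ + ‖A - P k‖ := by
      have he : P (k+1) - P k = (A - P k) - (A - P (k+1)) := by abel
      rw [he, norm_sub_rev]
      exact norm_sub_le _ _
    have h4 : ((2:ℝ)⁻¹)^((k+1)*(m+1)) ≤ ((2:ℝ)⁻¹)^(k*(m+1)) := by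
      refine pow_le_pow_of_le_one (by norm_num) (by norm_num) ?_
      exact Nat.mul_le_mul_right _ (Nat.le_succ k)
    have h5 : (0:ℝ) ≤ ((2:ℝ)⁻¹)^(k*(m+1)) := by positivity
    linarith
  -- Step 3 : normalized factorizations of the Q n
  have hfactall := fun n => factorable_normalized E F C N (hQmem n)
  choose Gb Sb Bb hSmem hSnorm hBmem hfact using hfactall
  -- Step 4 : the taming constants
  set Λ : ℕ → ℝ :=
    fun n => (2:ℝ)^(n*(m+1)) * ((m:ℝ) * 3^m * (‖Bb n‖ + 1)) + 1 with hΛdef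
  have hΛ1 : ∀ n, 1 ≤ Λ n := by
    intro n
    have h : (0:ℝ) ≤ (2:ℝ)^(n*(m+1)) * ((m:ℝ) * 3^m * (‖Bb n‖ + 1)) := by positivity
    rw [hΛdef]
    simp only
    linarith
  have hΛterm : ∀ n, (m:ℝ) * 3^m * (Λ n)⁻¹ * ‖Bb n‖ ≤ ((2:ℝ)⁻¹)^(n*(m+1)) := by
    intro n
    exact hLambda_term (n*(m+1)) ‖Bb n‖ (norm_nonneg _) ((m:ℝ) * 3^m) (by positivity)
  -- Step 5 : the big spaces
  set Hsp : Fin m → BanachSp'.{u} :=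
    fun i => ⟨lp (fun n => YB (Sb n i) (Λ n)) ∞⟩ with hHdef
  set W : ∀ (i : Fin m) (n : ℕ), (E i).carrier →L[ℝ] YB (Sb n i) (Λ n) :=
    fun i n => ((2:ℝ)⁻¹)^n • ((iotaB (Sb n i) (Λ n)).comp (Sb n i)) with hWdef
  have hW : ∀ i n x, ‖W i n x‖ ≤ ((2:ℝ)⁻¹)^n * ‖x‖ := by
    intro i n x
    show ‖(((2:ℝ)⁻¹)^n • ((iotaB (Sb n i) (Λ n)).comp (Sb n i))) x‖ ≤ _
    rw [ContinuousLinearMap.smul_apply, norm_smul, Real.norm_eq_abs,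
      abs_of_nonneg (by positivity)]
    refine mul_le_mul_of_nonneg_left ?_ (by positivity)
    exact norm_iotaB_T_le (Sb n i) (hΛ1 n) x
  set Vd : ∀ i : Fin m, (E i).carrier →L[ℝ] lp (fun n => YB (Sb n i) (Λ n)) ∞ :=
    fun i => lpDiag (W i) (hW i) with hVdef
  -- Step 6 : membership of the diagonal maps
  have hVmem : ∀ i, Vd i ∈ (C i).mem (Hsp i) := by
    intro i
    have htermMem : ∀ n, (lpSingleCLM n).comp (W i n) ∈ (C i).mem (Hsp i) := by
      intro n
      have h1 : (lpSingleCLM (Y := fun k => YB (Sb k i) (Λ k)) n).comp (W i n) = ((2:ℝ)⁻¹)^n •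
          (((lpSingleCLM (Y := fun k => YB (Sb k i) (Λ k)) n).comp
            (iotaB (Sb n i) (Λ n))).comp (Sb n i)) := by
        refine ContinuousLinearMap.ext (fun x => ?_)
        simp only [hWdef, ContinuousLinearMap.smul_apply, ContinuousLinearMap.comp_apply,
          map_smul]
      rw [h1]
      refine (C i).smul_mem (Hsp i) _ _ ?_
      refine (C i).comp_inj (Gb n i) (Hsp i) (Sb n i) (hSmem n i) _ ?_
      exact (lpSingleCLM_injective n).comp (iotaB_injective (Sb n i) (hSnorm n i) (hΛ1 n))
    have hpartial : ∀ NN, (∑ n ∈ Finset.range (NN+1), (lpSingleCLM n).comp (W i n)) ∈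
        (C i).mem (Hsp i) := by
      intro NN
      induction NN with
      | zero => rw [Finset.sum_range_one]; exact htermMem 0
      | succ k ih =>
        rw [Finset.sum_range_succ]
        exact (C i).add_mem (Hsp i) _ ih _ (htermMem (k+1))
    exact (C i).isClosed (Hsp i) |>.mem_of_tendsto (lpDiag_tendsto (W i) (hW i))
      (Filter.Eventually.of_forall hpartial)
  -- Step 7 : the transported multilinear operators
  set Θ : ℕ → ContinuousMultilinearMap ℝ (fun i => (Hsp i).carrier) F.carrier :=
    fun n => (Bb n).compContinuousLinearMap
      (fun i => ((2:ℝ)^n) • ((jB (Sb n i) (Λ n) (hSnorm n i) (hΛ1 n)).comp (lpEvalCLM n)))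
    with hΘdef
  have hpowinv : ∀ n : ℕ, (2:ℝ)^n * ((2:ℝ)⁻¹)^n = 1 := by
    intro n
    rw [← mul_pow]
    norm_num
  have hΘmem : ∀ n, Θ n ∈ N.mem Hsp F := by
    intro n
    refine N.comp_mem' (hBmem n) Hsp _ (fun i => fun g => ?_)
    refine ⟨lpSingleCLM n (iotaB (Sb n i) (Λ n) (((2:ℝ)⁻¹)^n • g)), ?_⟩
    rw [ContinuousLinearMap.smul_apply, ContinuousLinearMap.comp_apply, lpEvalCLM_single,
      jB_iotaB, smul_smul, hpowinv n, one_smul]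
  have hΘnorm : ∀ n, ‖Θ n‖ ≤
      (2:ℝ)^(n*m) * ((2:ℝ)^m * ‖Q n‖ + (m:ℝ) * 3^m * (Λ n)⁻¹ * ‖Bb n‖) := by
    intro n
    have hcomp : Θ n = ((Bb n).compContinuousLinearMap
        (fun i => jB (Sb n i) (Λ n) (hSnorm n i) (hΛ1 n))).compContinuousLinearMap
        (fun i => ((2:ℝ)^n) • (lpEvalCLM (Y := fun k => YB (Sb k i) (Λ k)) n)) := by
      ext y
      rw [hΘdef]
      simp only [ContinuousMultilinearMap.compContinuousLinearMap_apply,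
        ContinuousLinearMap.smul_apply, ContinuousLinearMap.comp_apply, map_smul]
    rw [hcomp]
    refine le_trans (ContinuousMultilinearMap.norm_compContinuousLinearMap_le _ _) ?_
    have h1 : ‖(Bb n).compContinuousLinearMap
        (fun i => jB (Sb n i) (Λ n) (hSnorm n i) (hΛ1 n))‖ ≤
        (2:ℝ)^m * ‖Q n‖ + (m:ℝ) * 3^m * (Λ n)⁻¹ * ‖Bb n‖ :=
      key_estimate (fun i => Sb n i) (hSnorm n) (hΛ1 n) (Bb n) (Q n) (hfact n)
    have h2 : ∏ i : Fin m,
        ‖((2:ℝ)^n) • (lpEvalCLM (Y := fun k => YB (Sb k i) (Λ k)) n)‖ ≤ (2:ℝ)^(n*m) := by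
      rw [pow_mul]
      have hstep : ∀ i : Fin m,
          ‖((2:ℝ)^n) • (lpEvalCLM (Y := fun k => YB (Sb k i) (Λ k)) n)‖ ≤ (2:ℝ)^n := by
        intro i
        refine le_trans (ContinuousLinearMap.opNorm_smul_le _ _) ?_
        rw [Real.norm_eq_abs, abs_of_nonneg (by positivity)]
        have hev := norm_lpEvalCLM_le (Y := fun k => YB (Sb k i) (Λ k)) n
        nlinarith [pow_nonneg (show (0:ℝ) ≤ 2 by norm_num) n]
      have hp : ∏ i : Fin m, ‖((2:ℝ)^n) • (lpEvalCLM (Y := fun k => YB (Sb k i) (Λ k)) n)‖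
          ≤ ∏ _i : Fin m, (2:ℝ)^n :=
        Finset.prod_le_prod (fun i _ => norm_nonneg _) (fun i _ => hstep i)
      have hc : ∏ _i : Fin m, (2:ℝ)^n = ((2:ℝ)^n)^m := by
        rw [Finset.prod_const, Finset.card_univ, Fintype.card_fin]
      exact le_trans hp (le_of_eq hc)
    have h3 : (0:ℝ) ≤ ∏ i : Fin m,
        ‖((2:ℝ)^n) • (lpEvalCLM (Y := fun k => YB (Sb k i) (Λ k)) n)‖ :=
      Finset.prod_nonneg (fun i _ => norm_nonneg _)
    have h4 : (0:ℝ) ≤ (2:ℝ)^m * ‖Q n‖ + (m:ℝ) * 3^m * (Λ n)⁻¹ * ‖Bb n‖ := by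
      have ha : (0:ℝ) ≤ (2:ℝ)^m * ‖Q n‖ := by positivity
      have hb : (0:ℝ) ≤ (m:ℝ) * 3^m * (Λ n)⁻¹ * ‖Bb n‖ := by
        have : (0:ℝ) < Λ n := lt_of_lt_of_le one_pos (hΛ1 n)
        positivity
      linarith
    calc ‖(Bb n).compContinuousLinearMap (fun i => jB (Sb n i) (Λ n) (hSnorm n i) (hΛ1 n))‖ *
        ∏ i : Fin m, ‖((2:ℝ)^n) • (lpEvalCLM (Y := fun k => YB (Sb k i) (Λ k)) n)‖
        ≤ ((2:ℝ)^m * ‖Q n‖ + (m:ℝ) * 3^m * (Λ n)⁻¹ * ‖Bb n‖) * (2:ℝ)^(n*m) :=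
      mul_le_mul h1 h2 h3 h4
    _ = (2:ℝ)^(n*m) * ((2:ℝ)^m * ‖Q n‖ + (m:ℝ) * 3^m * (Λ n)⁻¹ * ‖Bb n‖) := mul_comm _ _
  -- Step 8 : geometric bound for the tail
  have hΘbound : ∀ k : ℕ, ‖Θ (k+1)‖ ≤ ((2:ℝ)^(2*m+1) + 1) * ((2:ℝ)⁻¹)^k := by
    intro k
    have h0 := hΘnorm (k+1)
    have hq := hQnorm k
    have hl := hΛterm (k+1)
    have hA : (2:ℝ)^((k+1)*m) * ((2:ℝ)^m * ‖Q (k+1)‖) ≤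
        (2:ℝ)^((k+1)*m) * ((2:ℝ)^m * ((2:ℝ)⁻¹)^(k*(m+1))) := by
      have : (0:ℝ) ≤ (2:ℝ)^((k+1)*m) * (2:ℝ)^m := by positivity
      calc (2:ℝ)^((k+1)*m) * ((2:ℝ)^m * ‖Q (k+1)‖)
          = ((2:ℝ)^((k+1)*m) * (2:ℝ)^m) * ‖Q (k+1)‖ := by ring
      _ ≤ ((2:ℝ)^((k+1)*m) * (2:ℝ)^m) * ((2:ℝ)⁻¹)^(k*(m+1)) :=
        mul_le_mul_of_nonneg_left hq this
      _ = (2:ℝ)^((k+1)*m) * ((2:ℝ)^m * ((2:ℝ)⁻¹)^(k*(m+1))) := by ring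
    have hB : (2:ℝ)^((k+1)*m) * ((m:ℝ) * 3^m * (Λ (k+1))⁻¹ * ‖Bb (k+1)‖) ≤
        (2:ℝ)^((k+1)*m) * ((2:ℝ)⁻¹)^((k+1)*(m+1)) :=
      mul_le_mul_of_nonneg_left hl (by positivity)
    -- power computations via zpow
    have e1 : (2:ℝ)^((k+1)*m) * ((2:ℝ)^m * ((2:ℝ)⁻¹)^(k*(m+1))) =
        (2:ℝ)^(2*m+1) * ((2:ℝ)⁻¹)^(k+1) := by
      rw [two_pow_eq_zpow' ((k+1)*m), two_pow_eq_zpow' m, two_inv_pow_eq_zpow' (k*(m+1)),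
        two_pow_eq_zpow' (2*m+1), two_inv_pow_eq_zpow' (k+1), two_zpow_mul', two_zpow_mul',
        two_zpow_mul']
      congr 1
      push_cast
      ring
    have e2 : (2:ℝ)^((k+1)*m) * ((2:ℝ)⁻¹)^((k+1)*(m+1)) = ((2:ℝ)⁻¹)^(k+1) := by
      rw [two_pow_eq_zpow' ((k+1)*m), two_inv_pow_eq_zpow' ((k+1)*(m+1)),
        two_inv_pow_eq_zpow' (k+1), two_zpow_mul']
      congr 1
      push_cast
      ring
    have hhalf : ((2:ℝ)⁻¹)^(k+1) ≤ ((2:ℝ)⁻¹)^k :=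
      pow_le_pow_of_le_one (by norm_num) (by norm_num) (Nat.le_succ k)
    have hfin : ‖Θ (k+1)‖ ≤ (2:ℝ)^(2*m+1) * ((2:ℝ)⁻¹)^(k+1) + ((2:ℝ)⁻¹)^(k+1) := by
      have hd : (2:ℝ)^((k+1)*m) * ((2:ℝ)^m * ‖Q (k+1)‖ +
          (m:ℝ) * 3^m * (Λ (k+1))⁻¹ * ‖Bb (k+1)‖) =
          (2:ℝ)^((k+1)*m) * ((2:ℝ)^m * ‖Q (k+1)‖) +
          (2:ℝ)^((k+1)*m) * ((m:ℝ) * 3^m * (Λ (k+1))⁻¹ * ‖Bb (k+1)‖) := by ring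
      rw [hd] at h0
      calc ‖Θ (k+1)‖ ≤ _ := h0
      _ ≤ (2:ℝ)^((k+1)*m) * ((2:ℝ)^m * ((2:ℝ)⁻¹)^(k*(m+1))) +
          (2:ℝ)^((k+1)*m) * ((2:ℝ)⁻¹)^((k+1)*(m+1)) := add_le_add hA hB
      _ = (2:ℝ)^(2*m+1) * ((2:ℝ)⁻¹)^(k+1) + ((2:ℝ)⁻¹)^(k+1) := by rw [e1, e2]
    refine le_trans hfin ?_
    have hp1 : (0:ℝ) ≤ (2:ℝ)^(2*m+1) := by positivity
    have := mul_le_mul_of_nonneg_left hhalf hp1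
    have h2 : ((2:ℝ)⁻¹)^(k+1) ≤ ((2:ℝ)⁻¹)^k := hhalf
    calc (2:ℝ)^(2*m+1) * ((2:ℝ)⁻¹)^(k+1) + ((2:ℝ)⁻¹)^(k+1)
        ≤ (2:ℝ)^(2*m+1) * ((2:ℝ)⁻¹)^k + ((2:ℝ)⁻¹)^k := add_le_add this h2
    _ = ((2:ℝ)^(2*m+1) + 1) * ((2:ℝ)⁻¹)^k := by ring
  -- Step 9 : summability
  have hsummable : Summable Θ := by
    rw [← summable_nat_add_iff 1]
    refine Summable.of_norm_bounded (g := fun k => ((2:ℝ)^(2*m+1) + 1) * ((2:ℝ)⁻¹)^k)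
      (Summable.mul_left _ (summable_geometric_of_lt_one (by norm_num) (by norm_num)))
      (fun k => ?_)
    exact hΘbound k
  set 𝔅 := ∑' n, Θ n with h𝔅def
  have hps : Tendsto (fun NN => ∑ n ∈ Finset.range NN, Θ n) atTop (𝓝 𝔅) :=
    hsummable.hasSum.tendsto_sum_nat
  have h𝔅mem : 𝔅 ∈ N.mem Hsp F := by
    refine (N.isClosed Hsp F).mem_of_tendsto hps (Filter.Eventually.of_forall (fun NN => ?_))
    induction NN with
    | zero =>
      rw [Finset.range_zero, Finset.sum_empty]
      exact N.zero_mem Hsp F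
    | succ k ih =>
      rw [Finset.sum_range_succ]
      exact N.add_mem Hsp F _ ih _ (hΘmem k)
  -- Step 10 : the factorization identity
  have heq : ∀ x : ∀ i, (E i).carrier, A x = 𝔅 (fun i => Vd i (x i)) := by
    intro x
    have hΘapp : ∀ n, Θ n (fun i => Vd i (x i)) = Q n x := by
      intro n
      rw [hΘdef]
      simp only
      rw [ContinuousMultilinearMap.compContinuousLinearMap_apply, hfact n x]
      congr 1
      funext i
      rw [ContinuousLinearMap.smul_apply, ContinuousLinearMap.comp_apply]
      have h1 : lpEvalCLM n (Vd i (x i)) = W i n (x i) := by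
        rw [hVdef]
        exact lpDiag_coord (W i) (hW i) (x i) n
      rw [h1]
      have h2 : W i n (x i) = ((2:ℝ)⁻¹)^n • (iotaB (Sb n i) (Λ n) (Sb n i (x i))) := by
        rw [hWdef]
        simp only [ContinuousLinearMap.smul_apply, ContinuousLinearMap.comp_apply]
      rw [h2, map_smul, jB_iotaB, smul_smul, hpowinv n, one_smul]
    have hsum1 : ∀ NN, (∑ n ∈ Finset.range NN, Θ n) (fun i => Vd i (x i)) =
        ∑ n ∈ Finset.range NN, Q n x := by
      intro NN
      rw [ContinuousMultilinearMap.sum_apply]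
      exact Finset.sum_congr rfl (fun n _ => hΘapp n)
    have hQsum : ∀ k, ∑ n ∈ Finset.range (k+1), Q n x = P k x := by
      intro k
      induction k with
      | zero => rw [Finset.sum_range_one]; rfl
      | succ j ih =>
        rw [Finset.sum_range_succ, ih, hQs j]
        rw [ContinuousMultilinearMap.sub_apply]
        abel
    have hPx : Tendsto (fun k => P k x) atTop (𝓝 (A x)) := by
      rw [tendsto_iff_norm_sub_tendsto_zero]
      refine squeeze_zero (g := fun k => (4⁻¹ * ∏ i, ‖x i‖) * ((2:ℝ)⁻¹)^k)
        (fun k => norm_nonneg _) (fun k => ?_) ?_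
      · have hstep : ‖P k x - A x‖ ≤ ‖P k - A‖ * ∏ i, ‖x i‖ := by
          have h1 : P k x - A x = (P k - A) x := by
            rw [ContinuousMultilinearMap.sub_apply]
          rw [h1]
          exact (P k - A).le_opNorm x
        have h2 : ‖P k - A‖ ≤ 4⁻¹ * ((2:ℝ)⁻¹)^(k*(m+1)) := by
          rw [norm_sub_rev]
          exact hPdist k
        have h3 : ((2:ℝ)⁻¹)^(k*(m+1)) ≤ ((2:ℝ)⁻¹)^k := by
          refine pow_le_pow_of_le_one (by norm_num) (by norm_num) ?_
          exact Nat.le_mul_of_pos_right k (Nat.succ_pos m)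
        have h4 : (0:ℝ) ≤ ∏ i, ‖x i‖ := Finset.prod_nonneg (fun i _ => norm_nonneg _)
        calc ‖P k x - A x‖ ≤ ‖P k - A‖ * ∏ i, ‖x i‖ := hstep
        _ ≤ (4⁻¹ * ((2:ℝ)⁻¹)^k) * ∏ i, ‖x i‖ := by
          refine mul_le_mul_of_nonneg_right (le_trans h2 ?_) h4
          nlinarith [h3]
        _ = (4⁻¹ * ∏ i, ‖x i‖) * ((2:ℝ)⁻¹)^k := by ring
      · have hg := tendsto_pow_atTop_nhds_zero_of_lt_one
          (show (0:ℝ) ≤ 2⁻¹ by norm_num) (show (2:ℝ)⁻¹ < 1 by norm_num)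
        have hgm := hg.const_mul (4⁻¹ * ∏ i, ‖x i‖)
        simpa using hgm
    have hBx : Tendsto (fun NN => (∑ n ∈ Finset.range NN, Θ n) (fun i => Vd i (x i)))
        atTop (𝓝 (𝔅 (fun i => Vd i (x i)))) := by
      rw [tendsto_iff_norm_sub_tendsto_zero]
      refine squeeze_zero (g := fun NN => ‖(∑ n ∈ Finset.range NN, Θ n) - 𝔅‖ *
        ∏ i, ‖Vd i (x i)‖) (fun k => norm_nonneg _) (fun k => ?_) ?_
      · have h1 : (∑ n ∈ Finset.range k, Θ n) (fun i => Vd i (x i)) -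
            𝔅 (fun i => Vd i (x i)) =
            ((∑ n ∈ Finset.range k, Θ n) - 𝔅) (fun i => Vd i (x i)) := by
          rw [ContinuousMultilinearMap.sub_apply]
        rw [h1]
        exact ((∑ n ∈ Finset.range k, Θ n) - 𝔅).le_opNorm _
      · have h0 : Tendsto (fun NN => ‖(∑ n ∈ Finset.range NN, Θ n) - 𝔅‖) atTop (𝓝 0) := by
          rw [← tendsto_iff_norm_sub_tendsto_zero]
          exact hps
        have := h0.mul_const (∏ i, ‖Vd i (x i)‖)
        simpa using this
    have hshift : Tendsto (fun k => (∑ n ∈ Finset.range (k+1), Θ n) (fun i => Vd i (x i)))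
        atTop (𝓝 (𝔅 (fun i => Vd i (x i)))) := by
      exact hBx.comp (tendsto_add_atTop_nat 1)
    have hfuneq : (fun k => (∑ n ∈ Finset.range (k+1), Θ n) (fun i => Vd i (x i))) =
        fun k => P k x := by
      funext k
      rw [hsum1, hQsum]
    rw [hfuneq] at hshift
    exact tendsto_nhds_unique hPx hshift
  exact ⟨Hsp, Vd, 𝔅, hVmem, h𝔅mem, heq⟩

end MainClosed

/-- `N ∘ (C₁,…,C_m)(E₁,…,E_m;F)` is a closed linear subspace of `L(E₁,…,E_m;F)`. -/
theorem stmt19 {m : ℕ} (E : Fin m → BanachSp'.{u}) (F : BanachSp'.{u})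
    (C : ∀ i, InjClass'.{u} (E i).carrier) (N : MSemiIdeal'.{u} m) :
    IsClosed (FactorableOperators' E F C N) ∧
      (0 : ContinuousMultilinearMap ℝ (fun i => (E i).carrier) F.carrier) ∈
        FactorableOperators' E F C N ∧
      (∀ A₁ ∈ FactorableOperators' E F C N, ∀ A₂ ∈ FactorableOperators' E F C N,
        A₁ + A₂ ∈ FactorableOperators' E F C N) ∧
      (∀ (c : ℝ), ∀ A ∈ FactorableOperators' E F C N,
        c • A ∈ FactorableOperators' E F C N) := by
  exact ⟨factorable_isClosed E F C N, factorable_zero E F C N, factorable_add E F C N,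
    factorable_smul E F C N⟩
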